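/- Let U_n be the strictly upper triangular n×n matrix with u_{ij} = 1 if i < j and u_{ij} = 0 otherwise. Then for every real ε, det((1+ε)I_n + ε(U_n − U_nᵀ)) = ((1+2ε)^n + 1)/2. -/

import Mathlib

open Matrix

/-- The bidiagonal-with-full-first-row matrix obtained from the target matrix by
row reduction. -/
def Bm (ε : ℝ) (n : ℕ) : Matrix (Fin n) (Fin n) ℝ :=
  Matrix.of fun i j =>
    if (i : ℕ) = 0 then (if (j : ℕ) = 0 then 1 + ε else ε)
    else if (j : ℕ) = (i : ℕ) then 1
    else if (j : ℕ) + 1 = (i : ℕ) then -(1 + 2 * ε) else 0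

lemma detBm (ε : ℝ) : ∀ n, (Bm ε n).det = ((1 + 2 * ε) ^ n + 1) / 2 := by
  intro n
  induction n with
  | zero => norm_num [Matrix.det_fin_zero]
  | succ n ih =>
    cases n with
    | zero =>
      rw [Matrix.det_fin_one]
      simp only [Bm, Matrix.of_apply]
      norm_num
      ring
    | succ m =>
      rw [Matrix.det_succ_column (Bm ε (m + 2)) (Fin.last (m + 1))]
      have h0last : (0 : Fin (m + 2)) ≠ Fin.last (m + 1) := by
        simp [Fin.ext_iff]
      have hsum :
          (∑ i : Fin (m + 2), (-1 : ℝ) ^ ((i : ℕ) + ((Fin.last (m + 1) : Fin (m+2)) : ℕ)) *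
              Bm ε (m + 2) i (Fin.last (m + 1)) *
              ((Bm ε (m + 2)).submatrix i.succAbove (Fin.last (m + 1)).succAbove).det)
            = (∑ i ∈ ({0, Fin.last (m + 1)} : Finset (Fin (m + 2))),
              (-1 : ℝ) ^ ((i : ℕ) + ((Fin.last (m + 1) : Fin (m+2)) : ℕ)) *
              Bm ε (m + 2) i (Fin.last (m + 1)) *
              ((Bm ε (m + 2)).submatrix i.succAbove (Fin.last (m + 1)).succAbove).det) := by
        refine (Finset.sum_subset (Finset.subset_univ _) ?_).symm
        intro i _ hi
        simp only [Finset.mem_insert, Finset.mem_singleton, not_or] at hi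
        have h1 : (i : ℕ) ≠ 0 := by
          intro h
          exact hi.1 (Fin.ext h)
        have h2 : Bm ε (m + 2) i (Fin.last (m + 1)) = 0 := by
          have h3 : ((Fin.last (m + 1) : Fin (m + 2)) : ℕ) = m + 1 := rfl
          have h4 : (i : ℕ) ≠ m + 1 := by
            intro h
            exact hi.2 (Fin.ext (by simp [h, h3]))
          have h5 : (i : ℕ) < m + 2 := i.isLt
          simp only [Bm, Matrix.of_apply, Fin.val_last]
          rw [if_neg h1, if_neg (by omega), if_neg (by omega)]
        rw [h2, mul_zero, zero_mul]
      rw [hsum, Finset.sum_pair h0last]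
      -- the minor for i = last is Bm ε (m+1)
      have hminor_last :
          ((Bm ε (m + 2)).submatrix (Fin.last (m + 1)).succAbove
            (Fin.last (m + 1)).succAbove) = Bm ε (m + 1) := by
        ext i j
        simp [Bm, Fin.succAbove_last]
      -- the minor for i = 0 is upper triangular
      have hminor0 :
          ((Bm ε (m + 2)).submatrix (0 : Fin (m + 2)).succAbove
            (Fin.last (m + 1)).succAbove).det = (-(1 + 2 * ε)) ^ (m + 1) := by
        set C := (Bm ε (m + 2)).submatrix (0 : Fin (m + 2)).succAbove
            (Fin.last (m + 1)).succAbove with hC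
        have hCentry : ∀ i j : Fin (m + 1), C i j =
            if (j : ℕ) = (i : ℕ) + 1 then 1
            else if (j : ℕ) = (i : ℕ) then -(1 + 2 * ε) else 0 := by
          intro i j
          have : C i j = Bm ε (m + 2) i.succ j.castSucc := by
            simp [hC, Fin.succAbove_last, Fin.zero_succAbove]
          rw [this]
          simp only [Bm, Matrix.of_apply, Fin.val_succ, Fin.coe_castSucc]
          have : (i : ℕ) + 1 ≠ 0 := by omega
          rw [if_neg this]
          by_cases h1 : (j : ℕ) = (i : ℕ) + 1
          · simp [h1]
          · rw [if_neg h1, if_neg h1]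
            by_cases h2 : (j : ℕ) = (i : ℕ)
            · simp [h2]
            · rw [if_neg h2, if_neg (by omega)]
        have htri : C.BlockTriangular id := by
          intro i j hij
          have hij' : (j : ℕ) < (i : ℕ) := hij
          rw [hCentry, if_neg (by omega), if_neg (by omega)]
        rw [Matrix.det_of_upperTriangular htri]
        have : ∀ i : Fin (m + 1), C i i = -(1 + 2 * ε) := by
          intro i
          rw [hCentry, if_neg (by omega), if_pos rfl]
        rw [Finset.prod_congr rfl (fun i _ => this i)]
        simp
      have hB0 : Bm ε (m + 2) 0 (Fin.last (m + 1)) = ε := by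
        simp [Bm]
      have hBl : Bm ε (m + 2) (Fin.last (m + 1)) (Fin.last (m + 1)) = 1 := by
        simp [Bm]
      rw [hminor_last, hminor0, hB0, hBl, ih]
      have hlv : ((Fin.last (m + 1) : Fin (m + 2)) : ℕ) = m + 1 := rfl
      have h0v : ((0 : Fin (m + 2)) : ℕ) = 0 := rfl
      rw [hlv, h0v]
      have hpow : (-1 : ℝ) ^ (0 + (m + 1)) * (-(1 + 2 * ε)) ^ (m + 1)
          = (1 + 2 * ε) ^ (m + 1) := by
        rw [zero_add, ← mul_pow]
        ring_nf
      have hpow2 : (-1 : ℝ) ^ ((m + 1) + (m + 1)) = 1 := by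
        rw [← two_mul]
        exact Even.neg_one_pow ⟨m + 1, by ring⟩
      rw [hpow2]
      calc (-1 : ℝ) ^ (0 + (m + 1)) * ε * (-(1 + 2 * ε)) ^ (m + 1)
            + 1 * 1 * (((1 + 2 * ε) ^ (m + 1) + 1) / 2)
          = ε * ((-1 : ℝ) ^ (0 + (m + 1)) * (-(1 + 2 * ε)) ^ (m + 1))
            + ((1 + 2 * ε) ^ (m + 1) + 1) / 2 := by ring
        _ = ε * (1 + 2 * ε) ^ (m + 1) + ((1 + 2 * ε) ^ (m + 1) + 1) / 2 := by rw [hpow]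
        _ = ((1 + 2 * ε) ^ (m + 1 + 1) + 1) / 2 := by rw [pow_succ]; ring

/-- Let `U` be the strictly upper triangular `n × n` matrix of ones above the diagonal.
Then for every real `ε`, `det ((1+ε) I + ε (U - Uᵀ)) = ((1+2ε)^n + 1) / 2`. -/
theorem det_skew_triangular_shifted
    (n : ℕ) (ε : ℝ)
    (U : Matrix (Fin n) (Fin n) ℝ)
    (hU : U = Matrix.of fun i j => if i < j then (1 : ℝ) else 0) :
    ((1 + ε) • (1 : Matrix (Fin n) (Fin n) ℝ) + ε • (U - Uᵀ)).det
      = ((1 + 2 * ε) ^ n + 1) / 2 := by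
  set A := (1 + ε) • (1 : Matrix (Fin n) (Fin n) ℝ) + ε • (U - Uᵀ) with hA
  have hAentry : ∀ i j : Fin n, A i j =
      if i = j then 1 + ε else if i < j then ε else -ε := by
    intro i j
    simp only [hA, hU, Matrix.add_apply, Matrix.smul_apply, Matrix.one_apply,
      Matrix.sub_apply, Matrix.transpose_apply, Matrix.of_apply, smul_eq_mul]
    by_cases h : i = j
    · simp [h, lt_irrefl]
    · rcases lt_or_gt_of_ne h with hlt | hgt
      · simp [h, hlt, not_lt_of_gt hlt]
      · simp [h, hgt, not_lt_of_gt hgt, asymm hgt]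
  -- the row-reduction matrix
  set L : Matrix (Fin n) (Fin n) ℝ :=
    Matrix.of fun i k =>
      (if k = i then (1 : ℝ) else 0) + (if (k : ℕ) + 1 = (i : ℕ) then -1 else 0) with hL
  have hLA : L * A = Bm ε n := by
    ext i j
    rw [Matrix.mul_apply]
    have hsplit : ∀ k : Fin n, L i k * A k j =
        (if k = i then A k j else 0) + (if (k : ℕ) + 1 = (i : ℕ) then -A k j else 0) := by
      intro k
      simp only [hL, Matrix.of_apply]
      split_ifs <;> ring
    rw [Finset.sum_congr rfl (fun k _ => hsplit k), Finset.sum_add_distrib,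
      Finset.sum_ite_eq' Finset.univ i (fun k => A k j), if_pos (Finset.mem_univ i)]
    rcases i with ⟨iv, hi⟩
    cases iv with
    | zero =>
      have hz : (∑ k : Fin n, if (k : ℕ) + 1 = ((⟨0, hi⟩ : Fin n) : ℕ) then -A k j else 0)
          = 0 := by
        apply Finset.sum_eq_zero
        intro k _
        rw [if_neg (by simp only [Fin.val_mk]; omega)]
      rw [hz, add_zero, hAentry]
      simp only [Bm, Matrix.of_apply]
      by_cases h : (⟨0, hi⟩ : Fin n) = j
      · have : (j : ℕ) = 0 := by rw [← h]
        simp [h, this]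
      · have hj0 : (j : ℕ) ≠ 0 := by
          intro hc
          exact h (Fin.ext hc.symm)
        have hlt : (⟨0, hi⟩ : Fin n) < j := by
          rw [Fin.lt_iff_val_lt_val]
          show 0 < (j : ℕ)
          omega
        simp [h, hlt, hj0]
    | succ m =>
      have hm : m < n := by omega
      have hsum1 : (∑ k : Fin n, if (k : ℕ) + 1 = ((⟨m + 1, hi⟩ : Fin n) : ℕ)
          then -A k j else 0) = -A ⟨m, hm⟩ j := by
        rw [Finset.sum_eq_single (⟨m, hm⟩ : Fin n)]
        · simp
        · intro b _ hb
          rw [if_neg]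
          intro hc
          exact hb (Fin.ext (by simpa using hc))
        · intro h
          exact absurd (Finset.mem_univ _) h
      rw [hsum1, hAentry, hAentry]
      simp only [Bm, Matrix.of_apply]
      have h1 : (m + 1 : ℕ) ≠ 0 := by omega
      rw [if_neg h1]
      rcases lt_trichotomy (j : ℕ) m with hlt | heq | hgt
      · -- j < m : both entries -ε, result 0
        have e1 : ¬ (⟨m + 1, hi⟩ : Fin n) = j := by
          simp only [Fin.ext_iff, Fin.val_mk]; omega
        have e2 : ¬ (⟨m + 1, hi⟩ : Fin n) < j := by
          simp only [Fin.lt_iff_val_lt_val, Fin.val_mk]; omega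
        have e3 : ¬ (⟨m, hm⟩ : Fin n) = j := by
          simp only [Fin.ext_iff, Fin.val_mk]; omega
        have e4 : ¬ (⟨m, hm⟩ : Fin n) < j := by
          simp only [Fin.lt_iff_val_lt_val, Fin.val_mk]; omega
        rw [if_neg e1, if_neg e2, if_neg e3, if_neg e4,
          if_neg (by omega : ¬ (j : ℕ) = m + 1), if_neg (by omega : ¬ (j : ℕ) + 1 = m + 1)]
        ring
      · -- j = m : -ε - (1+ε) = -(1+2ε)
        have e1 : ¬ (⟨m + 1, hi⟩ : Fin n) = j := by
          simp only [Fin.ext_iff, Fin.val_mk]; omega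
        have e2 : ¬ (⟨m + 1, hi⟩ : Fin n) < j := by
          simp only [Fin.lt_iff_val_lt_val, Fin.val_mk]; omega
        have e3 : (⟨m, hm⟩ : Fin n) = j := Fin.ext (by simp only [Fin.val_mk]; omega)
        rw [if_neg e1, if_neg e2, if_pos e3,
          if_neg (by omega : ¬ (j : ℕ) = m + 1), if_pos (by omega : (j : ℕ) + 1 = m + 1)]
        ring
      · rcases Nat.eq_or_lt_of_le hgt with heq2 | hgt2
        · -- j = m + 1 : (1+ε) - ε = 1
          have e1 : (⟨m + 1, hi⟩ : Fin n) = j := Fin.ext (by simp only [Fin.val_mk]; omega)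
          have e3 : ¬ (⟨m, hm⟩ : Fin n) = j := by
            simp only [Fin.ext_iff, Fin.val_mk]; omega
          have e4 : (⟨m, hm⟩ : Fin n) < j := by
            simp only [Fin.lt_iff_val_lt_val, Fin.val_mk]; omega
          rw [if_pos e1, if_neg e3, if_pos e4, if_pos (by omega : (j : ℕ) = m + 1)]
          ring
        · -- j > m + 1 : ε - ε = 0
          have e1 : ¬ (⟨m + 1, hi⟩ : Fin n) = j := by
            simp only [Fin.ext_iff, Fin.val_mk]; omega
          have e2 : (⟨m + 1, hi⟩ : Fin n) < j := by
            simp only [Fin.lt_iff_val_lt_val, Fin.val_mk]; omega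
          have e3 : ¬ (⟨m, hm⟩ : Fin n) = j := by
            simp only [Fin.ext_iff, Fin.val_mk]; omega
          have e4 : (⟨m, hm⟩ : Fin n) < j := by
            simp only [Fin.lt_iff_val_lt_val, Fin.val_mk]; omega
          rw [if_neg e1, if_pos e2, if_neg e3, if_pos e4,
            if_neg (by omega : ¬ (j : ℕ) = m + 1), if_neg (by omega : ¬ (j : ℕ) + 1 = m + 1)]
          ring
  have hdetL : L.det = 1 := by
    have htri : L.BlockTriangular OrderDual.toDual := by
      intro i j hij
      have hij' : (i : ℕ) < (j : ℕ) := hij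
      simp only [hL, Matrix.of_apply]
      rw [if_neg (by intro h; have := congrArg Fin.val h; omega),
        if_neg (by omega)]
      ring
    rw [Matrix.det_of_lowerTriangular L htri]
    have : ∀ i : Fin n, L i i = 1 := by
      intro i
      have h2 : ¬((i : ℕ) + 1 = (i : ℕ)) := by omega
      simp [hL, h2]
    rw [Finset.prod_congr rfl (fun i _ => this i)]
    simp
  have := congrArg Matrix.det hLA
  rw [Matrix.det_mul, hdetL, one_mul] at this
  rw [this, detBm]
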